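/- arXiv:2605.18171 — 8 statements merged into one kernel-verified Lean document; each statement's English description precedes it below -/
import Mathlib

section
/- Let m ≥ 2 and R ≥ 0 be integers and set k₀ := m·(R+1) and k₁ := (m+1)·(R+1). Then for every integer o, every b ∈ {0,1}, and every positive integer L_max, the number of natural numbers L with L ≤ L_max such that the integer interval [k_b·L, k_b·L + R] contains some element of the arithmetic progression {k_{1−b}·L' + o : L' ∈ ℤ} is at most L_max/m + 1 (as real numbers). -/
private theorem counting_aux (m R Lmax : ℕ) (N M : ℤ) (hm : 2 ≤ m)
    (hM : (m : ℤ) ≤ M) (hcop : IsCoprime N M) (o : ℤ) :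
    (({L : ℕ | L ≤ Lmax ∧ ∃ L' : ℤ,
        N * ((R : ℤ) + 1) * (L : ℤ) ≤ M * ((R : ℤ) + 1) * L' + o ∧
        M * ((R : ℤ) + 1) * L' + o ≤ N * ((R : ℤ) + 1) * (L : ℤ) + (R : ℤ)}.ncard : ℝ))
      ≤ (Lmax : ℝ) / (m : ℝ) + 1 := by
  set S : Set ℕ := {L : ℕ | L ≤ Lmax ∧ ∃ L' : ℤ,
        N * ((R : ℤ) + 1) * (L : ℤ) ≤ M * ((R : ℤ) + 1) * L' + o ∧
        M * ((R : ℤ) + 1) * L' + o ≤ N * ((R : ℤ) + 1) * (L : ℤ) + (R : ℤ)} with hS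
  have hmpos : 0 < m := by omega
  have hMpos : (0 : ℤ) < M := lt_of_lt_of_le (by exact_mod_cast hmpos) hM
  set Mn : ℕ := M.toNat with hMn
  have hMnM : (Mn : ℤ) = M := Int.toNat_of_nonneg hMpos.le
  have hmMn : m ≤ Mn := by omega
  have key : ∀ L1 ∈ S, ∀ L2 ∈ S, L1 % Mn = L2 % Mn := by
    intro L1 hL1 L2 hL2
    obtain ⟨-, L1', h11, h12⟩ := hL1
    obtain ⟨-, L2', h21, h22⟩ := hL2
    have hdvd : M ∣ ((L1 : ℤ) - L2) := by
      set t : ℤ := M * (L1' - L2') - N * ((L1 : ℤ) - L2) with hT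
      have heq : ((R : ℤ) + 1) * t =
          (M * ((R : ℤ) + 1) * L1' + o - N * ((R : ℤ) + 1) * L1)
          - (M * ((R : ℤ) + 1) * L2' + o - N * ((R : ℤ) + 1) * L2) := by
        rw [hT]; ring
      have hRnn : (0 : ℤ) ≤ R := Int.natCast_nonneg R
      have hub : ((R : ℤ) + 1) * t ≤ R := by linarith
      have hlb : -(R : ℤ) ≤ ((R : ℤ) + 1) * t := by linarith
      have ht : t = 0 := by
        by_contra h
        rcases lt_or_gt_of_ne h with h | h
        · have h1 : t ≤ -1 := by omega
          nlinarith
        · have h1 : 1 ≤ t := by omega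
          nlinarith
      have hmul : N * ((L1 : ℤ) - L2) = M * (L1' - L2') := by
        have : M * (L1' - L2') - N * ((L1 : ℤ) - L2) = 0 := ht
        linarith
      exact (hcop.symm).dvd_of_dvd_mul_left ⟨L1' - L2', hmul⟩
    have hmod : (L1 : ℤ) % (Mn : ℤ) = (L2 : ℤ) % (Mn : ℤ) := by
      rw [hMnM]
      exact (Int.modEq_iff_dvd.mpr hdvd : Int.ModEq M (L2 : ℤ) (L1 : ℤ)).symm
    exact_mod_cast hmod
  have hfin : S.Finite := Set.Finite.subset (Set.finite_Iic Lmax) (fun L hL => hL.1)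
  have hcount : S.ncard ≤ Lmax / Mn + 1 := by
    have h1 : S.ncard ≤ (↑(Finset.Iic (Lmax / Mn)) : Set ℕ).ncard := by
      apply Set.ncard_le_ncard_of_injOn (fun L => L / Mn)
      · intro L hL
        simp only [Finset.coe_Iic, Set.mem_Iic]
        exact Nat.div_le_div_right hL.1
      · intro L1 h1 L2 h2 h
        simp only at h
        have hk := key L1 h1 L2 h2
        calc L1 = Mn * (L1 / Mn) + L1 % Mn := (Nat.div_add_mod L1 Mn).symm
          _ = Mn * (L2 / Mn) + L2 % Mn := by rw [h, hk]
          _ = L2 := Nat.div_add_mod L2 Mn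
    rwa [Set.ncard_coe_finset, Nat.card_Iic] at h1
  have hcount2 : S.ncard ≤ Lmax / m + 1 := by
    have : Lmax / Mn ≤ Lmax / m := Nat.div_le_div_left hmMn hmpos
    omega
  calc (S.ncard : ℝ) ≤ ((Lmax / m + 1 : ℕ) : ℝ) := by exact_mod_cast hcount2
    _ = ((Lmax / m : ℕ) : ℝ) + 1 := by push_cast; ring
    _ ≤ (Lmax : ℝ) / (m : ℝ) + 1 := by
        have := Nat.cast_div_le (α := ℝ) (m := Lmax) (n := m)
        linarith

/-- Explicit-constant instance of the constants lemma: with `k₀ = m·(R+1)` and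
`k₁ = (m+1)·(R+1)`, the number of windows `[k_b·L, k_b·L+R]` with `L ≤ L_max` that
meet the arithmetic progression `{k_{1−b}·L' + o : L' ∈ ℤ}` is at most `L_max/m + 1`. -/
theorem counting_windows_hitting_progression
    (m R : ℕ) (hm : 2 ≤ m) (k : Fin 2 → ℤ)
    (hk0 : k 0 = (m : ℤ) * (R + 1)) (hk1 : k 1 = ((m : ℤ) + 1) * (R + 1))
    (o : ℤ) (b : Fin 2) (Lmax : ℕ) (hLmax : 0 < Lmax) :
    (({L : ℕ | L ≤ Lmax ∧ ∃ L' : ℤ,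
        k b * (L : ℤ) ≤ k (1 - b) * L' + o ∧
        k (1 - b) * L' + o ≤ k b * (L : ℤ) + (R : ℤ)}.ncard : ℝ))
      ≤ (Lmax : ℝ) / (m : ℝ) + 1 := by
  fin_cases b
  · simp only [Fin.zero_eta, show (1 - 0 : Fin 2) = 1 from rfl, hk0, hk1]
    exact counting_aux m R Lmax (m : ℤ) ((m : ℤ) + 1) hm (by linarith) ⟨-1, 1, by ring⟩ o
  · simp only [Fin.mk_one, show (1 - 1 : Fin 2) = 0 from rfl, hk0, hk1]
    exact counting_aux m R Lmax ((m : ℤ) + 1) (m : ℤ) hm le_rfl ⟨1, -1, by ring⟩ o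
end

section
/- Let m ≥ 2 and R ≥ 0 be integers, k₀ := m·(R+1), k₁ := (m+1)·(R+1), let o be an integer and b ∈ {0,1}. If for some natural number L there exists an integer L' with k_b·L ≤ k_{1−b}·L' + o ≤ k_b·L + R, then for every integer j with 1 ≤ j ≤ m − 1 there is no integer L'' with k_b·(L+j) ≤ k_{1−b}·L'' + o ≤ k_b·(L+j) + R. -/
private lemma whg_squeeze_zero (Rz X : ℤ) (hR : 0 ≤ Rz)
    (h1 : -Rz ≤ (Rz + 1) * X) (h2 : (Rz + 1) * X ≤ Rz) : X = 0 := by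
  rcases lt_trichotomy X 0 with h | h | h
  · exfalso
    have hx : X + 1 ≤ 0 := by omega
    nlinarith
  · exact h
  · exfalso
    have hx : 1 ≤ X := by omega
    nlinarith

private lemma gapA (M d j : ℤ) (hM : 2 ≤ M) (hj1 : 1 ≤ j) (hj2 : j ≤ M - 1)
    (heq : (M + 1) * d = M * j) : False := by
  have ht : M * (j - d) = d := by linear_combination -heq
  have hd1 : 0 < d := by
    by_contra h
    push_neg at h
    have : 0 < M * (j - d) := mul_pos (by linarith) (by linarith)
    linarith
  have hjd : 0 < j - d := by
    by_contra h
    push_neg at h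
    have : M * (j - d) ≤ 0 := mul_nonpos_of_nonneg_of_nonpos (by linarith) (by linarith)
    linarith
  have hMd : M * 1 ≤ M * (j - d) :=
    mul_le_mul_of_nonneg_left (by omega) (by linarith)
  have : M ≤ d := by linarith
  linarith

private lemma gapB (M d j : ℤ) (hM : 2 ≤ M) (hj1 : 1 ≤ j) (hj2 : j ≤ M - 1)
    (heq : M * d = (M + 1) * j) : False := by
  have ht : M * (d - j) = j := by linear_combination heq
  have hdj : 0 < d - j := by
    by_contra h
    push_neg at h
    have : M * (d - j) ≤ 0 := mul_nonpos_of_nonneg_of_nonpos (by linarith) (by linarith)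
    linarith
  have hMd : M * 1 ≤ M * (d - j) :=
    mul_le_mul_of_nonneg_left (by omega) (by linarith)
  linarith

/-- Gap step of the constants lemma: with `k₀ = m·(R+1)` and `k₁ = (m+1)·(R+1)`,
once the window `[k_b·L, k_b·L+R]` meets the arithmetic progression
`{k_{1−b}·L' + o : L' ∈ ℤ}`, the next `m−1` windows miss it. -/
theorem window_hit_gap
    (m R : ℕ) (hm : 2 ≤ m) (k : Fin 2 → ℤ)
    (hk0 : k 0 = (m : ℤ) * (R + 1)) (hk1 : k 1 = ((m : ℤ) + 1) * (R + 1))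
    (o : ℤ) (b : Fin 2) (L : ℕ)
    (hhit : ∃ L' : ℤ,
      k b * (L : ℤ) ≤ k (1 - b) * L' + o ∧
      k (1 - b) * L' + o ≤ k b * (L : ℤ) + (R : ℤ)) :
    ∀ j : ℤ, 1 ≤ j → j ≤ (m : ℤ) - 1 →
      ¬ ∃ L'' : ℤ,
        k b * ((L : ℤ) + j) ≤ k (1 - b) * L'' + o ∧
        k (1 - b) * L'' + o ≤ k b * ((L : ℤ) + j) + (R : ℤ) := by
  obtain ⟨L', h1, h2⟩ := hhit
  intro j hj1 hj2 hcon
  obtain ⟨L'', h3, h4⟩ := hcon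
  have hM : (2 : ℤ) ≤ (m : ℤ) := by exact_mod_cast hm
  have hR : (0 : ℤ) ≤ (R : ℤ) := Int.natCast_nonneg R
  set M := (m : ℤ)
  set Rz := (R : ℤ)
  obtain hb | hb : b = 0 ∨ b = 1 := by omega
  · subst hb
    rw [show (1 - 0 : Fin 2) = 1 by decide] at h1 h2 h3 h4
    rw [hk0, hk1] at h1 h2 h3 h4
    have hub : (Rz + 1) * ((M + 1) * (L'' - L') - M * j) ≤ Rz := by
      have e1 : (Rz + 1) * ((M + 1) * (L'' - L') - M * j) =
          ((M + 1) * (Rz + 1) * L'' + o) - ((M + 1) * (Rz + 1) * L' + o)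
            - (M * (Rz + 1) * ((L : ℤ) + j) - M * (Rz + 1) * (L : ℤ)) := by ring
      rw [e1]; linarith
    have hlb : -Rz ≤ (Rz + 1) * ((M + 1) * (L'' - L') - M * j) := by
      have e1 : (Rz + 1) * ((M + 1) * (L'' - L') - M * j) =
          ((M + 1) * (Rz + 1) * L'' + o) - ((M + 1) * (Rz + 1) * L' + o)
            - (M * (Rz + 1) * ((L : ℤ) + j) - M * (Rz + 1) * (L : ℤ)) := by ring
      rw [e1]; linarith
    have hD := whg_squeeze_zero Rz _ hR hlb hub
    exact gapA M (L'' - L') j hM hj1 hj2 (by linarith)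
  · subst hb
    rw [show (1 - 1 : Fin 2) = 0 by decide] at h1 h2 h3 h4
    rw [hk0, hk1] at h1 h2 h3 h4
    have hub : (Rz + 1) * (M * (L'' - L') - (M + 1) * j) ≤ Rz := by
      have e1 : (Rz + 1) * (M * (L'' - L') - (M + 1) * j) =
          (M * (Rz + 1) * L'' + o) - (M * (Rz + 1) * L' + o)
            - ((M + 1) * (Rz + 1) * ((L : ℤ) + j) - (M + 1) * (Rz + 1) * (L : ℤ)) := by ring
      rw [e1]; linarith
    have hlb : -Rz ≤ (Rz + 1) * (M * (L'' - L') - (M + 1) * j) := by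
      have e1 : (Rz + 1) * (M * (L'' - L') - (M + 1) * j) =
          (M * (Rz + 1) * L'' + o) - (M * (Rz + 1) * L' + o)
            - ((M + 1) * (Rz + 1) * ((L : ℤ) + j) - (M + 1) * (Rz + 1) * (L : ℤ)) := by ring
      rw [e1]; linarith
    have hD := whg_squeeze_zero Rz _ hR hlb hub
    exact gapB M (L'' - L') j hM hj1 hj2 (by linarith)
end

section
/- Two-round graded agreement (Berman–Garay–Perry protocol). Assume n > 3t and each node v has an input x_v ∈ 𝒱. The protocol prescribes: in round 1, every correct node w sends x_w to all nodes; in round 2, a correct node w sends x_w to all nodes if it received the value x_w from at least n − t nodes in round 1, and otherwise sends nothing. After round 2, each correct node v outputs a pair (y_v, g_v) ∈ 𝒱 × {0,1} determined as follows: if v received x_v from at least n − t nodes in round 2, then (y_v, g_v) = (x_v, 1); otherwise, if some value was received by v from at least t + 1 nodes in round 2, then g_v = 0 and y_v is some value that v received from at least t + 1 nodes in round 2; otherwise (y_v, g_v) = (x_v, 0). Then in every execution: (Validity) if there is x ∈ 𝒱 with x_v = x for all v ∈ H, then (y_v, g_v) = (x, 1) for every v ∈ H; and (Graded Agreement) if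 g_w = 1 for some w ∈ H, then y_v = y_w for every v ∈ H. -/
/-- Number of distinct senders from which `v` received the message `c`
(`recv u` is the message received from node `u`). -/
def recvCount {n : ℕ} {M : Type*} [DecidableEq M]
    (recv : Fin n → Option M) (c : M) : ℕ :=
  (Finset.univ.filter fun u => recv u = some c).card

/-- Two-round graded agreement (Berman–Garay–Perry): validity and graded agreement.
`H` is the set of correct nodes (at most `t` nodes are faulty), `recv1 v w`/`recv2 v w`
is the message `v` receives from `w` in round 1/2; messages from correct nodes follow
the protocol, messages from faulty nodes are arbitrary. -/
theorem graded_agreement_two_rounds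
    {n t : ℕ} {𝒱 : Type*} [Nonempty 𝒱] [DecidableEq 𝒱]
    (hnt : 3 * t < n)
    (H : Finset (Fin n)) (hH : (Finset.univ \ H).card ≤ t)
    (x : Fin n → 𝒱)
    (recv1 recv2 : Fin n → Fin n → Option 𝒱)
    -- round 1: every correct node sends its input to all nodes
    (h1 : ∀ v : Fin n, ∀ w ∈ H, recv1 v w = some (x w))
    -- round 2: a correct node repeats its input iff it was received n − t times
    (h2 : ∀ v : Fin n, ∀ w ∈ H, recv2 v w =
      if n - t ≤ recvCount (recv1 w) (x w) then some (x w) else none)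
    (y : Fin n → 𝒱) (g : Fin n → Fin 2)
    -- output rule at correct nodes
    (hout : ∀ v ∈ H,
      (n - t ≤ recvCount (recv2 v) (x v) → y v = x v ∧ g v = 1) ∧
      (¬ n - t ≤ recvCount (recv2 v) (x v) →
        (∃ c : 𝒱, t + 1 ≤ recvCount (recv2 v) c) →
          g v = 0 ∧ t + 1 ≤ recvCount (recv2 v) (y v)) ∧
      (¬ n - t ≤ recvCount (recv2 v) (x v) →
        ¬ (∃ c : 𝒱, t + 1 ≤ recvCount (recv2 v) c) →
          y v = x v ∧ g v = 0)) :
    -- Validity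
    (∀ c : 𝒱, (∀ v ∈ H, x v = c) → ∀ v ∈ H, y v = c ∧ g v = 1) ∧
    -- Graded Agreement
    (∀ w ∈ H, g w = 1 → ∀ v ∈ H, y v = y w) := by
  classical
  have hHn : H.card ≤ n := by
    simpa using Finset.card_le_univ H
  have hHt : n - H.card ≤ t := by
    have : (Finset.univ \ H).card = n - H.card := by
      rw [Finset.card_sdiff_of_subset (Finset.subset_univ H), Finset.card_univ, Fintype.card_fin]
    omega
  -- counting: all but at most (n - |H|) senders of a value are correct
  have key : ∀ (recv : Fin n → Option 𝒱) (c : 𝒱),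
      recvCount recv c ≤ (H.filter fun u => recv u = some c).card + (n - H.card) := by
    intro recv c
    have hsub : (Finset.univ.filter fun u => recv u = some c) ⊆
        (H.filter fun u => recv u = some c) ∪ (Finset.univ \ H) := by
      intro u hu
      simp only [Finset.mem_filter, Finset.mem_union, Finset.mem_sdiff, Finset.mem_univ,
        true_and] at *
      by_cases h : u ∈ H
      · exact Or.inl ⟨h, hu⟩
      · exact Or.inr h
    have hcd : (Finset.univ \ H).card = n - H.card := by
      rw [Finset.card_sdiff_of_subset (Finset.subset_univ H), Finset.card_univ, Fintype.card_fin]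
    calc recvCount recv c ≤ _ := Finset.card_le_card hsub
      _ ≤ _ := Finset.card_union_le _ _
      _ = _ := by rw [hcd]
  -- if t+1 nodes sent c to v in round 2, some correct node sent it, so c is its input
  -- and it had a round-1 quorum for it
  have sender : ∀ v : Fin n, ∀ c : 𝒱, t + 1 ≤ recvCount (recv2 v) c →
      ∃ u ∈ H, x u = c ∧ n - t ≤ recvCount (recv1 u) (x u) := by
    intro v c hc
    have hk := key (recv2 v) c
    have hpos : 0 < (H.filter fun u => recv2 v u = some c).card := by omega
    obtain ⟨u, hu⟩ := Finset.card_pos.mp hpos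
    rw [Finset.mem_filter] at hu
    obtain ⟨huH, hrecv⟩ := hu
    rw [h2 v u huH] at hrecv
    by_cases hq : n - t ≤ recvCount (recv1 u) (x u)
    · rw [if_pos hq] at hrecv
      exact ⟨u, huH, Option.some_injective _ hrecv, hq⟩
    · rw [if_neg hq] at hrecv
      exact absurd hrecv (by simp)
  -- two correct nodes with round-1 quorums have equal inputs
  have uniq : ∀ u₁ ∈ H, ∀ u₂ ∈ H, n - t ≤ recvCount (recv1 u₁) (x u₁) →
      n - t ≤ recvCount (recv1 u₂) (x u₂) → x u₁ = x u₂ := by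
    intro u₁ h₁ u₂ h₂' hq₁ hq₂
    by_contra hne
    have hk₁ := key (recv1 u₁) (x u₁)
    have hk₂ := key (recv1 u₂) (x u₂)
    set T₁ := H.filter fun u => recv1 u₁ u = some (x u₁) with hT₁
    set T₂ := H.filter fun u => recv1 u₂ u = some (x u₂) with hT₂
    have hdisj : Disjoint T₁ T₂ := by
      rw [Finset.disjoint_left]
      intro u hu₁ hu₂
      rw [hT₁, Finset.mem_filter] at hu₁
      rw [hT₂, Finset.mem_filter] at hu₂
      rw [h1 u₁ u hu₁.1] at hu₁
      rw [h1 u₂ u hu₂.1] at hu₂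
      exact hne ((Option.some_injective _ hu₁.2).symm.trans (Option.some_injective _ hu₂.2))
    have hsub : T₁ ∪ T₂ ⊆ H := by
      apply Finset.union_subset <;> exact Finset.filter_subset _ _
    have hcard := Finset.card_le_card hsub
    rw [Finset.card_union_of_disjoint hdisj] at hcard
    omega
  constructor
  · -- Validity
    intro c hall v hv
    have hr2 : ∀ w ∈ H, recv2 v w = some c := by
      intro w hw
      have hq : n - t ≤ recvCount (recv1 w) (x w) := by
        have hsub : H ⊆ Finset.univ.filter fun u => recv1 w u = some (x w) := by
          intro u hu
          rw [Finset.mem_filter, h1 w u hu, hall u hu, hall w hw]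
          simp
        have := Finset.card_le_card hsub
        unfold recvCount
        omega
      rw [h2 v w hw, if_pos hq, hall w hw]
    have hq2 : n - t ≤ recvCount (recv2 v) (x v) := by
      have hsub : H ⊆ Finset.univ.filter fun u => recv2 v u = some (x v) := by
        intro u hu
        rw [Finset.mem_filter, hr2 u hu, hall v hv]
        simp
      have := Finset.card_le_card hsub
      unfold recvCount
      omega
    obtain ⟨hy, hg⟩ := (hout v hv).1 hq2
    exact ⟨hy.trans (hall v hv), hg⟩
  · -- Graded Agreement
    intro w hw hgw v hv
    obtain ⟨hw1, hw2, hw3⟩ := hout w hw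
    -- g w = 1 forces the first output case at w
    have hcw : n - t ≤ recvCount (recv2 w) (x w) := by
      by_contra hcw
      by_cases hc : ∃ c, t + 1 ≤ recvCount (recv2 w) c
      · have := (hw2 hcw hc).1
        rw [hgw] at this
        exact absurd this (by decide)
      · have := (hw3 hcw hc).2
        rw [hgw] at this
        exact absurd this (by decide)
    obtain ⟨hyw, _⟩ := hw1 hcw
    -- at least t+1 correct nodes sent x w in round 2 (to everyone)
    have prop : ∀ v' : Fin n, t + 1 ≤ recvCount (recv2 v') (x w) := by
      intro v'
      have hk := key (recv2 w) (x w)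
      set T := H.filter fun u => recv2 w u = some (x w) with hT
      have hTcard : t + 1 ≤ T.card := by omega
      have hsub : T ⊆ Finset.univ.filter fun u => recv2 v' u = some (x w) := by
        intro u hu
        rw [hT, Finset.mem_filter] at hu
        obtain ⟨huH, hrecv⟩ := hu
        rw [h2 w u huH] at hrecv
        by_cases hq : n - t ≤ recvCount (recv1 u) (x u)
        · rw [if_pos hq] at hrecv
          rw [Finset.mem_filter, h2 v' u huH, if_pos hq]
          exact ⟨Finset.mem_univ u, hrecv⟩
        · rw [if_neg hq] at hrecv
          exact absurd hrecv (by simp)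
      have := Finset.card_le_card hsub
      unfold recvCount
      omega
    -- a correct witness for x w with a round-1 quorum
    obtain ⟨u', hu'H, hxu', hqu'⟩ := sender w (x w) (by have := prop w; omega)
    obtain ⟨hv1, hv2, hv3⟩ := hout v hv
    by_cases hcv : n - t ≤ recvCount (recv2 v) (x v)
    · obtain ⟨hyv, _⟩ := hv1 hcv
      obtain ⟨u, huH, hxu, hqu⟩ := sender v (x v) (by omega)
      rw [hyv, hyw, ← hxu, ← hxu']
      exact uniq u huH u' hu'H hqu hqu'
    · have hyvcount := (hv2 hcv ⟨x w, prop v⟩).2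
      obtain ⟨u, huH, hxu, hqu⟩ := sender v (y v) hyvcount
      rw [hyw, ← hxu, ← hxu']
      exact uniq u huH u' hu'H hqu hqu'
end

section
/- Two-round weak graded agreement. Assume n > 3t and each node v has an input (x_v, s_v) ∈ 𝒱 × {0,1}. The protocol prescribes: in round 1, a correct node w sends x_w to all nodes if s_w = 1 and otherwise sends nothing; in round 2, a correct node w with s_w = 1 sends x_w to all nodes if the number of round-1 messages it received carrying a value different from x_w is at most t, and otherwise sends the special message NACK to all nodes; a correct node with s_w = 0 sends nothing in round 2. After round 2, each correct node v outputs (y_v, g_v) ∈ 𝒱 × {0,1} determined as follows: if the number of round-2 messages v received that differ from x_v (i.e., that are NACK or carry a value different from x_v) is at most t, then (y_v, g_v) = (x_v, 1); otherwise, if some value x ∈ 𝒱 was received by v from at least t + 1 nodes in round 2, then g_v = 0 and y_v is some such value; otherwise (y_v, g_v) = (x_v, 0). Then in every execution: (Validity) if there is x ∈ 𝒱 with x_v = x for all v ∈ H, then (y_v, g_v) = (x, 1) for every v ∈ H; and (Weak Graded Agreement) if s_v = 1 for all v ∈ H and g_w = 1 for some w ∈ H, then y_v = y_w for every v ∈ H.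 -/
/-- Round-2 messages: either a value of `𝒱` or the special message `NACK`. -/
abbrev Msg2 (𝒱 : Type*) := 𝒱 ⊕ Unit

/-- The special `NACK` message. -/
def NACK {𝒱 : Type*} : Msg2 𝒱 := Sum.inr ()

/-- Two-round weak graded agreement: validity and weak graded agreement.
`H` is the set of correct nodes (at most `t` nodes are faulty), `recv1 v w`/`recv2 v w`
is the message `v` receives from `w` in round 1/2; messages from correct nodes follow
the protocol (a node with `s = 0` stays silent), messages from faulty nodes are arbitrary. -/
theorem weak_graded_agreement_two_rounds
    {n t : ℕ} {𝒱 : Type*} [Nonempty 𝒱] [DecidableEq 𝒱]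
    (hnt : 3 * t < n)
    (H : Finset (Fin n)) (hH : (Finset.univ \ H).card ≤ t)
    (x : Fin n → 𝒱) (s : Fin n → Fin 2)
    (recv1 : Fin n → Fin n → Option 𝒱)
    (recv2 : Fin n → Fin n → Option (Msg2 𝒱))
    -- round 1: a correct node sends its input to all nodes iff s = 1
    (h1 : ∀ v : Fin n, ∀ w ∈ H, recv1 v w = if s w = 1 then some (x w) else none)
    -- round 2: a correct node with s = 1 repeats its input if at most t received
    -- round-1 messages carried a different value, and otherwise sends NACK;
    -- a correct node with s = 0 stays silent
    (h2 : ∀ v : Fin n, ∀ w ∈ H, recv2 v w =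
      if s w = 1 then
        (if (Finset.univ.filter fun u =>
              recv1 w u ≠ none ∧ recv1 w u ≠ some (x w)).card ≤ t
         then some (Sum.inl (x w)) else some NACK)
      else none)
    (y : Fin n → 𝒱) (g : Fin n → Fin 2)
    -- output rule at correct nodes
    (hout : ∀ v ∈ H,
      ((Finset.univ.filter fun u =>
          recv2 v u ≠ none ∧ recv2 v u ≠ some (Sum.inl (x v))).card ≤ t →
        y v = x v ∧ g v = 1) ∧
      (¬ (Finset.univ.filter fun u =>
          recv2 v u ≠ none ∧ recv2 v u ≠ some (Sum.inl (x v))).card ≤ t →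
        (∃ c : 𝒱, t + 1 ≤
            (Finset.univ.filter fun u => recv2 v u = some (Sum.inl c)).card) →
          g v = 0 ∧ t + 1 ≤
            (Finset.univ.filter fun u => recv2 v u = some (Sum.inl (y v))).card) ∧
      (¬ (Finset.univ.filter fun u =>
          recv2 v u ≠ none ∧ recv2 v u ≠ some (Sum.inl (x v))).card ≤ t →
        ¬ (∃ c : 𝒱, t + 1 ≤
            (Finset.univ.filter fun u => recv2 v u = some (Sum.inl c)).card) →
          y v = x v ∧ g v = 0)) :
    -- Validity
    (∀ c : 𝒱, (∀ v ∈ H, x v = c) → ∀ v ∈ H, y v = c ∧ g v = 1) ∧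
    -- Weak Graded Agreement
    ((∀ v ∈ H, s v = 1) → ∀ w ∈ H, g w = 1 → ∀ v ∈ H, y v = y w) := by
  classical
  have hcardH : n ≤ H.card + t := by
    have e : (Finset.univ \ H).card = n - H.card := by
      rw [Finset.card_sdiff_of_subset (Finset.subset_univ H), Finset.card_univ, Fintype.card_fin]
    have hle : H.card ≤ n := by
      have := Finset.card_le_univ H
      simpa using this
    omega
  have fb : ∀ (p : Fin n → Prop) (inst : DecidablePred p),
      (∀ u ∈ H, ¬ p u) → (@Finset.filter _ p inst Finset.univ).card ≤ t := by
    intro p inst h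
    refine le_trans (Finset.card_le_card ?_) hH
    intro u hu
    simp only [Finset.mem_filter, Finset.mem_univ, true_and] at hu
    simp only [Finset.mem_sdiff, Finset.mem_univ, true_and]
    exact fun hmem => h u hmem hu
  constructor
  · -- Validity
    intro c hc v hv
    have hsend : ∀ u ∈ H, ∀ z : Fin n, recv2 z u =
        if s u = 1 then some (Sum.inl c) else none := by
      intro u hu z
      rw [h2 z u hu]
      by_cases hsu : s u = 1
      · have hcnt : (Finset.univ.filter fun z' =>
            recv1 u z' ≠ none ∧ recv1 u z' ≠ some (x u)).card ≤ t := by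
          apply fb
          intro z' hz'
          rw [h1 u z' hz']
          by_cases hsz : s z' = 1 <;> simp [hsz, hc z' hz', hc u hu]
        rw [if_pos hsu, if_pos hsu, if_pos hcnt, hc u hu]
      · rw [if_neg hsu, if_neg hsu]
    have hcv : (Finset.univ.filter fun u =>
        recv2 v u ≠ none ∧ recv2 v u ≠ some (Sum.inl (x v))).card ≤ t := by
      apply fb
      intro u hu
      rw [hsend u hu v]
      by_cases hsu : s u = 1 <;> simp [hsu, hc v hv]
    obtain ⟨hy, hg⟩ := (hout v hv).1 hcv
    exact ⟨hy.trans (hc v hv), hg⟩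
  · -- Weak graded agreement
    intro hs w hw hgw v hv
    have hcw : (Finset.univ.filter fun u =>
        recv2 w u ≠ none ∧ recv2 w u ≠ some (Sum.inl (x w))).card ≤ t := by
      by_contra hcw
      by_cases hex : ∃ c : 𝒱, t + 1 ≤
          (Finset.univ.filter fun u => recv2 w u = some (Sum.inl c)).card
      · have h0 := ((hout w hw).2.1 hcw hex).1
        rw [hgw] at h0
        exact absurd h0 (by decide)
      · have h0 := ((hout w hw).2.2 hcw hex).2
        rw [hgw] at h0
        exact absurd h0 (by decide)
    have hyw : y w = x w := ((hout w hw).1 hcw).1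
    have hsame : ∀ u ∈ H, ∀ z : Fin n, recv2 z u = recv2 w u := by
      intro u hu z
      rw [h2 z u hu, h2 w u hu]
    have hnn : ∀ u ∈ H, recv2 w u ≠ none := by
      intro u hu
      rw [h2 w u hu, if_pos (hs u hu)]
      split <;> simp
    have hBsub : H.filter (fun u => ¬ recv2 w u = some (Sum.inl (x w))) ⊆
        Finset.univ.filter fun u => recv2 w u ≠ none ∧ recv2 w u ≠ some (Sum.inl (x w)) := by
      intro u hu
      simp only [Finset.mem_filter, Finset.mem_univ, true_and, ne_eq] at *
      exact ⟨hnn u hu.1, hu.2⟩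
    have hB : (H.filter (fun u => ¬ recv2 w u = some (Sum.inl (x w)))).card ≤ t :=
      le_trans (Finset.card_le_card hBsub) hcw
    have hA : t + 1 ≤ (H.filter (fun u => recv2 w u = some (Sum.inl (x w)))).card := by
      have hsum := Finset.card_filter_add_card_filter_not
        (s := H) (p := fun u => recv2 w u = some (Sum.inl (x w)))
      omega
    have hAcount : ∀ z : Fin n, t + 1 ≤
        (Finset.univ.filter fun u => recv2 z u = some (Sum.inl (x w))).card := by
      intro z
      refine le_trans hA (Finset.card_le_card ?_)
      intro u hu
      simp only [Finset.mem_filter, Finset.mem_univ, true_and] at *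
      rw [hsame u hu.1 z]
      exact hu.2
    have hDsub : H.filter (fun u => ¬ x u = x w) ⊆
        H.filter (fun u => ¬ recv2 w u = some (Sum.inl (x w))) := by
      intro u hu
      simp only [Finset.mem_filter] at *
      refine ⟨hu.1, ?_⟩
      rw [h2 w u hu.1, if_pos (hs u hu.1)]
      split
      · simp only [Option.some.injEq, Sum.inl.injEq]
        exact hu.2
      · simp [NACK]
    have hDcard : (H.filter (fun u => ¬ x u = x w)).card ≤ t :=
      le_trans (Finset.card_le_card hDsub) hB
    have hGcard : t + 1 ≤ (H.filter (fun u => x u = x w)).card := by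
      have hsum := Finset.card_filter_add_card_filter_not
        (s := H) (p := fun u => x u = x w)
      omega
    have hNACK : ∀ u ∈ H, ¬ x u = x w → recv2 w u = some NACK := by
      intro u hu hxu
      rw [h2 w u hu, if_pos (hs u hu)]
      have hgt : ¬ (Finset.univ.filter fun z =>
          recv1 u z ≠ none ∧ recv1 u z ≠ some (x u)).card ≤ t := by
        have hsub : H.filter (fun z => x z = x w) ⊆
            Finset.univ.filter fun z => recv1 u z ≠ none ∧ recv1 u z ≠ some (x u) := by
          intro z hz
          simp only [Finset.mem_filter, Finset.mem_univ, true_and] at *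
          rw [h1 u z hz.1, if_pos (hs z hz.1)]
          refine ⟨by simp, ?_⟩
          simp only [ne_eq, Option.some.injEq]
          exact fun h => hxu (by rw [← h]; exact hz.2)
        have := le_trans hGcard (Finset.card_le_card hsub)
        omega
      rw [if_neg hgt]
    have hwrong : ∀ c : 𝒱, ¬ c = x w → ∀ z : Fin n,
        (Finset.univ.filter fun u => recv2 z u = some (Sum.inl c)).card ≤ t := by
      intro c hcx z
      apply fb
      intro u hu h
      rw [hsame u hu z] at h
      by_cases hxu : x u = x w
      · rw [h2 w u hu, if_pos (hs u hu)] at h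
        split at h
        · simp only [Option.some.injEq, Sum.inl.injEq] at h
          exact hcx (by rw [← h, hxu])
        · simp [NACK] at h
      · rw [hNACK u hu hxu] at h
        simp [NACK] at h
    by_cases hcv : (Finset.univ.filter fun u =>
        recv2 v u ≠ none ∧ recv2 v u ≠ some (Sum.inl (x v))).card ≤ t
    · obtain ⟨hyv, -⟩ := (hout v hv).1 hcv
      have hxv : x v = x w := by
        by_contra hne
        have hsub : (Finset.univ.filter fun u => recv2 v u = some (Sum.inl (x w))) ⊆
            Finset.univ.filter fun u =>
              recv2 v u ≠ none ∧ recv2 v u ≠ some (Sum.inl (x v)) := by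
          intro u hu
          simp only [Finset.mem_filter, Finset.mem_univ, true_and] at *
          rw [hu]
          refine ⟨by simp, ?_⟩
          simp only [ne_eq, Option.some.injEq, Sum.inl.injEq]
          exact fun h => hne h.symm
        have := le_trans (hAcount v) (Finset.card_le_card hsub)
        omega
      rw [hyv, hxv, hyw]
    · have hex : ∃ c : 𝒱, t + 1 ≤
          (Finset.univ.filter fun u => recv2 v u = some (Sum.inl c)).card :=
        ⟨x w, hAcount v⟩
      obtain ⟨-, hyc⟩ := (hout v hv).2.1 hcv hex
      by_contra hne
      rw [hyw] at hne
      have := hwrong (y v) hne v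
      omega
end

section
/- King consensus from graded agreement. Assume n > 3t, and each node v has inputs x_v ∈ 𝒱 and ℓ_v ∈ Option (Fin n). Suppose z : Fin n → 𝒱 and g : Fin n → {0,1} satisfy the graded agreement specification with respect to the inputs x, namely: (GA-Validity) if there is x ∈ 𝒱 with x_v = x for all v ∈ H then (z_v, g_v) = (x, 1) for all v ∈ H, and (GA-Agreement) if g_w = 1 for some w ∈ H then z_v = z_w for all v ∈ H. In a further round, every correct node w sends z_w to all nodes; let recv₃ denote the received messages, so recv₃ v w = some z_w for all v and all w ∈ H. Each correct node v outputs y_v ∈ Option 𝒱 determined by: if ℓ_v = none then y_v = none; otherwise, if g_v = 0 and recv₃ v ℓ' = some c (where ℓ_v = some ℓ'), then y_v = some c; otherwise y_v = some z_v. Then: (Validity) if there is x ∈ 𝒱 with x_v = x for all v ∈ H, then y_v ∈ {some x, none} for all v ∈ H; (Default) if ℓ_v = none for all v ∈ H, then y_v = none for all v ∈ H; (King Agreement) if there is ℓ ∈ H with ℓ_v = some ℓ for all v ∈ H, then y_v = y_ℓ ≠ none for all v ∈ H. -/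
/-- King consensus from graded agreement: given outputs `(z, g)` of a graded agreement
on the inputs `x`, a further round in which every correct node broadcasts `z`, and the
output rule "output `none` if no leader; else follow the leader's broadcast value when the
own grade is 0; else output the own graded-agreement value", the outputs satisfy validity,
default, and king agreement. `H` is the set of correct nodes (at most `t` faulty). -/
theorem king_consensus_from_graded_agreement
    {n t : ℕ} {𝒱 : Type*} [Nonempty 𝒱] [DecidableEq 𝒱]
    (hnt : 3 * t < n)
    (H : Finset (Fin n)) (hH : (Finset.univ \ H).card ≤ t)
    (x : Fin n → 𝒱) (ℓ : Fin n → Option (Fin n))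
    (z : Fin n → 𝒱) (g : Fin n → Fin 2)
    -- GA-Validity
    (hGAval : ∀ c : 𝒱, (∀ v ∈ H, x v = c) → ∀ v ∈ H, z v = c ∧ g v = 1)
    -- GA-Agreement
    (hGAagr : ∀ w ∈ H, g w = 1 → ∀ v ∈ H, z v = z w)
    (recv3 : Fin n → Fin n → Option 𝒱)
    -- further round: every correct node sends its graded-agreement value to all nodes
    (h3 : ∀ v : Fin n, ∀ w ∈ H, recv3 v w = some (z w))
    (y : Fin n → Option 𝒱)
    -- output rule at correct nodes
    (hout : ∀ v ∈ H,
      (ℓ v = none → y v = none) ∧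
      (∀ ℓ' : Fin n, ℓ v = some ℓ' →
        (g v = 0 → (∀ c : 𝒱, recv3 v ℓ' = some c → y v = some c) ∧
          (recv3 v ℓ' = none → y v = some (z v))) ∧
        (g v ≠ 0 → y v = some (z v)))) :
    -- Validity
    (∀ c : 𝒱, (∀ v ∈ H, x v = c) → ∀ v ∈ H, y v = some c ∨ y v = none) ∧
    -- Default
    ((∀ v ∈ H, ℓ v = none) → ∀ v ∈ H, y v = none) ∧
    -- King Agreement
    (∀ ℓ₀ ∈ H, (∀ v ∈ H, ℓ v = some ℓ₀) → ∀ v ∈ H, y v = y ℓ₀ ∧ y ℓ₀ ≠ none) := by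
  refine ⟨?_, ?_, ?_⟩
  · intro c hc v hv
    obtain ⟨hz, hg⟩ := hGAval c hc v hv
    cases hℓ : ℓ v with
    | none => exact Or.inr ((hout v hv).1 hℓ)
    | some ℓ' =>
      left
      have := ((hout v hv).2 ℓ' hℓ).2 (by simp [hg])
      rw [this, hz]
  · intro h v hv
    exact (hout v hv).1 (h v hv)
  · intro ℓ₀ hℓ₀ hall v hv
    have hrecv : ∀ u, recv3 u ℓ₀ = some (z ℓ₀) := fun u => h3 u ℓ₀ hℓ₀
    have hyℓ₀ : y ℓ₀ = some (z ℓ₀) := by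
      rcases show g ℓ₀ = 0 ∨ g ℓ₀ = 1 from by omega with hg | hg
      · exact (((hout ℓ₀ hℓ₀).2 ℓ₀ (hall ℓ₀ hℓ₀)).1 hg).1 _ (hrecv ℓ₀)
      · exact ((hout ℓ₀ hℓ₀).2 ℓ₀ (hall ℓ₀ hℓ₀)).2 (by simp [hg])
    refine ⟨?_, by simp [hyℓ₀]⟩
    rcases show g v = 0 ∨ g v = 1 from by omega with hg | hg
    · rw [(((hout v hv).2 ℓ₀ (hall v hv)).1 hg).1 _ (hrecv v), hyℓ₀]
    · have := ((hout v hv).2 ℓ₀ (hall v hv)).2 (by simp [hg])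
      rw [this, hyℓ₀, hGAagr v hv hg ℓ₀ hℓ₀]
end

section
/- Four-round graded king consensus. Assume n > 3t and each node v has inputs x_v ∈ 𝒱 and ℓ_v ∈ Option (Fin n). The protocol prescribes: (round 1) a correct node w with ℓ_w = some u sends x_w to node u and nothing to other nodes; a correct node with ℓ_w = none sends nothing. (round 2) a correct node w sets h_w := 1 and sends x_w to all nodes if ℓ_w = some w and w received the value x_w from at least n − t nodes in round 1; otherwise it sets h_w := 0 and sends nothing. (round 3) a correct node v with ℓ_v = some ℓ' that received in round 2 from ℓ' a value c with c ≠ x_v sends c to all nodes; otherwise it sends nothing. (round 4) a correct node w sends x_w to exactly those nodes from which it received the value x_w in round 3. Output: each correct node v outputs (y_v, g_v), where g_v := h_v, and y_v := x' for some value x' that v received from at least t + 1 nodes in round 4 if such a value exists, and y_v := x_v otherwise. Then in every execution: (Validity) if there is x ∈ 𝒱 with x_v = x for all v ∈ H, then y_v = x for all v ∈ H; (King Validity) if there are x ∈ 𝒱 and ℓ ∈ H with (x_v, ℓ_v) = (x, some ℓ) for all v ∈ H, then g_ℓ = 1; (Graded King Agreement) if there is ℓ ∈ H with ℓ_v = some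 ℓ for all v ∈ H and g_ℓ = 1, then y_v = y_ℓ for all v ∈ H. -/
lemma exists_correct_sender {n t : ℕ} {M : Type*} [DecidableEq M]
    (H : Finset (Fin n)) (hH : (Finset.univ \ H).card ≤ t)
    (recv : Fin n → Option M) (c : M) (hc : t + 1 ≤ recvCount recv c) :
    ∃ w ∈ H, recv w = some c := by
  by_contra hcon
  push_neg at hcon
  have hsub : (Finset.univ.filter fun u => recv u = some c) ⊆ Finset.univ \ H := by
    intro u hu
    simp only [Finset.mem_filter] at hu
    simp only [Finset.mem_sdiff, Finset.mem_univ, true_and]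
    exact fun huH => hcon u huH hu.2
  have := Finset.card_le_card hsub
  unfold recvCount at hc
  omega

lemma many_correct_senders {n t : ℕ} {M : Type*} [DecidableEq M]
    (H : Finset (Fin n)) (hH : (Finset.univ \ H).card ≤ t)
    (recv : Fin n → Option M) (c : M) (hc : n - t ≤ recvCount recv c) :
    n - 2 * t ≤ ((Finset.univ.filter fun u => recv u = some c) ∩ H).card := by
  unfold recvCount at hc
  have h1 : ((Finset.univ.filter fun u => recv u = some c) \ H).card +
      ((Finset.univ.filter fun u => recv u = some c) ∩ H).card =
      (Finset.univ.filter fun u => recv u = some c).card :=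
    Finset.card_sdiff_add_card_inter _ H
  have h2 : ((Finset.univ.filter fun u => recv u = some c) \ H).card ≤
      (Finset.univ \ H).card :=
    Finset.card_le_card (Finset.sdiff_subset_sdiff (Finset.subset_univ _) (le_refl H))
  omega

/-- Four-round graded king consensus: validity, king validity, and graded king agreement.
`H` is the set of correct nodes (at most `t` faulty); `recvᵢ v w` is the message `v`
receives from `w` in round `i`; messages from correct nodes follow the protocol,
messages from faulty nodes are arbitrary. -/
theorem graded_king_consensus_four_rounds
    {n t : ℕ} {𝒱 : Type*} [Nonempty 𝒱] [DecidableEq 𝒱]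
    (hnt : 3 * t < n)
    (H : Finset (Fin n)) (hH : (Finset.univ \ H).card ≤ t)
    (x : Fin n → 𝒱) (ℓ : Fin n → Option (Fin n))
    (recv1 recv2 recv3 recv4 : Fin n → Fin n → Option 𝒱)
    (h : Fin n → Fin 2)
    -- round 1: a correct node sends its input to its leader only
    (h1 : ∀ v : Fin n, ∀ w ∈ H, recv1 v w = if ℓ w = some v then some (x w) else none)
    -- a correct node sets h = 1 iff it is its own leader and received its input n − t times
    (hh : ∀ w ∈ H, (h w = 1 ↔ (ℓ w = some w ∧ n - t ≤ recvCount (recv1 w) (x w))))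
    -- round 2: a correct node sends its input to all nodes iff h = 1
    (h2 : ∀ v : Fin n, ∀ w ∈ H, recv2 v w = if h w = 1 then some (x w) else none)
    -- round 3: a correct node forwards the value received from its leader in round 2
    -- to all nodes, provided it differs from its own input; otherwise it is silent
    (h3 : ∀ u : Fin n, ∀ v ∈ H, recv3 u v =
      match ℓ v with
      | none => none
      | some ℓ' =>
        match recv2 v ℓ' with
        | none => none
        | some c => if c = x v then none else some c)
    -- round 4: a correct node sends its input exactly to those nodes from which
    -- it received its input in round 3
    (h4 : ∀ v : Fin n, ∀ w ∈ H, recv4 v w =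
      if recv3 w v = some (x w) then some (x w) else none)
    (y : Fin n → 𝒱) (g : Fin n → Fin 2)
    -- output rule at correct nodes
    (hout : ∀ v ∈ H, g v = h v ∧
      ((∃ c : 𝒱, t + 1 ≤ recvCount (recv4 v) c) →
        t + 1 ≤ recvCount (recv4 v) (y v)) ∧
      (¬ (∃ c : 𝒱, t + 1 ≤ recvCount (recv4 v) c) → y v = x v)) :
    -- Validity
    (∀ c : 𝒱, (∀ v ∈ H, x v = c) → ∀ v ∈ H, y v = c) ∧
    -- King Validity
    (∀ c : 𝒱, ∀ ℓ₀ ∈ H, (∀ v ∈ H, x v = c ∧ ℓ v = some ℓ₀) → g ℓ₀ = 1) ∧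
    -- Graded King Agreement
    (∀ ℓ₀ ∈ H, (∀ v ∈ H, ℓ v = some ℓ₀) → g ℓ₀ = 1 → ∀ v ∈ H, y v = y ℓ₀) := by
  refine ⟨?_, ?_, ?_⟩
  · -- Validity
    intro c hall v hv
    obtain ⟨-, hy1, hy2⟩ := hout v hv
    by_cases hex : ∃ c' : 𝒱, t + 1 ≤ recvCount (recv4 v) c'
    · have hy := hy1 hex
      obtain ⟨w, hwH, hw⟩ := exists_correct_sender H hH _ _ hy
      rw [h4 v w hwH] at hw
      split at hw
      · exact (Option.some_injective _ hw).symm.trans (hall w hwH)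
      · exact absurd hw (by simp)
    · rw [hy2 hex]; exact hall v hv
  · -- King Validity
    intro c ℓ₀ hℓ₀ hall
    rw [(hout ℓ₀ hℓ₀).1, (hh ℓ₀ hℓ₀).2]
    refine ⟨(hall ℓ₀ hℓ₀).2, ?_⟩
    have hsub : H ⊆ Finset.univ.filter fun u => recv1 ℓ₀ u = some (x ℓ₀) := by
      intro w hw
      simp only [Finset.mem_filter, Finset.mem_univ, true_and]
      rw [h1 ℓ₀ w hw, (hall w hw).2, if_pos rfl, (hall w hw).1, (hall ℓ₀ hℓ₀).1]
    have := Finset.card_le_card hsub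
    have hcard : H.card + (Finset.univ \ H).card = (Finset.univ : Finset (Fin n)).card := by
      rw [Finset.card_sdiff_of_subset (Finset.subset_univ H)]
      have := Finset.card_le_card (Finset.subset_univ H)
      omega
    simp only [Finset.card_univ, Fintype.card_fin] at hcard
    unfold recvCount
    omega
  · -- Graded King Agreement
    intro ℓ₀ hℓ₀ hall hg v hv
    set c := x ℓ₀ with hc
    have hhℓ₀ : h ℓ₀ = 1 := (hout ℓ₀ hℓ₀).1 ▸ hg
    obtain ⟨hself, hcount⟩ := (hh ℓ₀ hℓ₀).1 hhℓ₀
    -- every node receives c from ℓ₀ in round 2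
    have hr2 : ∀ u : Fin n, recv2 u ℓ₀ = some c := fun u => by
      rw [h2 u ℓ₀ hℓ₀, if_pos hhℓ₀]
    -- correct nodes w with x w = c : at least t+1 of them, certified by round 1
    set F := Finset.univ.filter fun u => recv1 ℓ₀ u = some c with hF
    have hFH : t + 1 ≤ (F ∩ H).card := by
      have := many_correct_senders H hH (recv1 ℓ₀) c hcount
      rw [← hF] at this
      omega
    have hFHx : ∀ w ∈ F ∩ H, x w = c := by
      intro w hw
      rw [Finset.mem_inter, hF, Finset.mem_filter] at hw
      obtain ⟨⟨-, hw1⟩, hwH⟩ := hw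
      rw [h1 ℓ₀ w hwH] at hw1
      split at hw1
      · exact Option.some_injective _ hw1
      · exact absurd hw1 (by simp)
    have hFHmem : ∀ w ∈ F ∩ H, w ∈ H := fun w hw => (Finset.mem_inter.mp hw).2
    -- ℓ₀ sends nothing in round 3
    have hr3ℓ₀ : ∀ u : Fin n, recv3 u ℓ₀ = none := fun u => by
      rw [h3 u ℓ₀ hℓ₀, hself]
      simp [hr2 ℓ₀, hc]
    -- y ℓ₀ = c : no round-4 value reaches t+1 at ℓ₀
    have hnoex : ¬ ∃ c' : 𝒱, t + 1 ≤ recvCount (recv4 ℓ₀) c' := by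
      rintro ⟨c', hc'⟩
      obtain ⟨w, hwH, hw⟩ := exists_correct_sender H hH _ _ hc'
      rw [h4 ℓ₀ w hwH] at hw
      split at hw
      · rename_i hcond
        rw [hr3ℓ₀ w] at hcond
        exact absurd hcond (by simp)
      · exact absurd hw (by simp)
    have hyℓ₀ : y ℓ₀ = c := (hout ℓ₀ hℓ₀).2.2 hnoex
    rw [hyℓ₀]
    by_cases hxv : x v = c
    · -- v sends nothing in round 3, so no value reaches t+1 at v
      have hr3v : ∀ u : Fin n, recv3 u v = none := fun u => by
        rw [h3 u v hv, hall v hv]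
        simp [hr2 v, hxv]
      have hnoexv : ¬ ∃ c' : 𝒱, t + 1 ≤ recvCount (recv4 v) c' := by
        rintro ⟨c', hc'⟩
        obtain ⟨w, hwH, hw⟩ := exists_correct_sender H hH _ _ hc'
        rw [h4 v w hwH] at hw
        split at hw
        · rename_i hcond
          rw [hr3v w] at hcond
          exact absurd hcond (by simp)
        · exact absurd hw (by simp)
      rw [(hout v hv).2.2 hnoexv, hxv]
    · -- v forwards c in round 3
      have hr3v : ∀ u : Fin n, recv3 u v = some c := fun u => by
        rw [h3 u v hv, hall v hv]
        simp only [hr2 v]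
        exact if_neg fun hcx => hxv hcx.symm
      -- every w ∈ F ∩ H sends c to v in round 4
      have hsub : F ∩ H ⊆ Finset.univ.filter fun u => recv4 v u = some c := by
        intro w hw
        simp only [Finset.mem_filter, Finset.mem_univ, true_and]
        rw [h4 v w (hFHmem w hw), hr3v w, hFHx w hw, if_pos rfl]
      have hex : ∃ c' : 𝒱, t + 1 ≤ recvCount (recv4 v) c' := by
        refine ⟨c, ?_⟩
        have := Finset.card_le_card hsub
        unfold recvCount
        omega
      have hy := (hout v hv).2.1 hex
      obtain ⟨w, hwH, hw⟩ := exists_correct_sender H hH _ _ hy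
      rw [h4 v w hwH] at hw
      split at hw
      · rename_i hcond
        rw [hr3v w] at hcond
        have hxw : x w = c := (Option.some_injective _ hcond).symm
        rw [hxw] at hw
        exact (Option.some_injective _ hw).symm
      · exact absurd hw (by simp)
end

section
/- Eight-round king consensus, correctness. Assume n > 3t and each node v has inputs x_v ∈ 𝒱 and ℓ_v ∈ Option (Fin n). Suppose k : Fin n → 𝒱 and h : Fin n → {0,1} satisfy the graded king consensus specification with respect to (x, ℓ): (i) if there is x ∈ 𝒱 with x_v = x for all v ∈ H then k_v = x for all v ∈ H; (ii) if there are x ∈ 𝒱 and ℓ ∈ H with (x_v, ℓ_v) = (x, some ℓ) for all v ∈ H then h_ℓ = 1; (iii) if there is ℓ ∈ H with ℓ_v = some ℓ for all v ∈ H and h_ℓ = 1, then k_v = k_ℓ for all v ∈ H. In a further round, a correct node w sends the special message runGC to all nodes iff ℓ_w = some w and h_w = 0; define s_v := 1 if ℓ_v = some ℓ' and v received runGC from ℓ' in this round, and s_v := 0 otherwise. Suppose z : Fin n → 𝒱 and g : Fin n → {0,1} satisfy the weak graded agreement specification with respect to the inputs (k_v, s_v): (iv) if there is c ∈ 𝒱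 with k_v = c for all v ∈ H then (z_v, g_v) = (c, 1) for all v ∈ H; (v) if s_v = 1 for all v ∈ H and g_w = 1 for some w ∈ H, then z_v = z_w for all v ∈ H. In a final round, a correct node w sends z_w to all nodes iff ℓ_w = some w. Each correct node v outputs y_v ∈ Option 𝒱 as follows: if ℓ_v = none then y_v := none; otherwise, if g_v = 0 and v received a value c from ℓ' (where ℓ_v = some ℓ') in the final round, then y_v := some c; otherwise y_v := some z_v. Then: (Validity) if there is x ∈ 𝒱 with x_v = x for all v ∈ H, then y_v ∈ {some x, none} for all v ∈ H; (Default) if ℓ_v = none for all v ∈ H, then y_v = none for all v ∈ H; (King Agreement) if there is ℓ ∈ H with ℓ_v = some ℓ for all v ∈ H, then y_v = y_ℓ ≠ none for all v ∈ H. -/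
/-- Eight-round king consensus, correctness: composing graded king consensus
(outputs `(k, h)`), a `runGC` signaling round, weak graded agreement on inputs
`(k, s)` (outputs `(z, g)`), and a final leader broadcast yields validity, default,
and king agreement. `H` is the set of correct nodes (at most `t` faulty); `recv` values
from correct nodes follow the protocol, those from faulty nodes are arbitrary. -/
theorem king_consensus_eight_rounds_correct
    {n t : ℕ} {𝒱 : Type*} [Nonempty 𝒱] [DecidableEq 𝒱]
    (hnt : 3 * t < n)
    (H : Finset (Fin n)) (hH : (Finset.univ \ H).card ≤ t)
    (x : Fin n → 𝒱) (ℓ : Fin n → Option (Fin n))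
    (k : Fin n → 𝒱) (h : Fin n → Fin 2)
    -- (i) graded-king-consensus validity
    (hi : ∀ c : 𝒱, (∀ v ∈ H, x v = c) → ∀ v ∈ H, k v = c)
    -- (ii) king validity
    (hii : ∀ c : 𝒱, ∀ ℓ₀ ∈ H, (∀ v ∈ H, x v = c ∧ ℓ v = some ℓ₀) → h ℓ₀ = 1)
    -- (iii) graded king agreement
    (hiii : ∀ ℓ₀ ∈ H, (∀ v ∈ H, ℓ v = some ℓ₀) → h ℓ₀ = 1 → ∀ v ∈ H, k v = k ℓ₀)
    (recvGC : Fin n → Fin n → Option Unit)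
    -- signaling round: a correct node sends runGC to all nodes iff it is its own
    -- leader and has grade 0
    (hGC : ∀ v : Fin n, ∀ w ∈ H, recvGC v w =
      if ℓ w = some w ∧ h w = 0 then some () else none)
    (s : Fin n → Fin 2)
    -- a correct node sets s = 1 iff it received runGC from its leader
    (hs : ∀ v ∈ H, (s v = 1 ↔ ∃ ℓ' : Fin n, ℓ v = some ℓ' ∧ recvGC v ℓ' = some ()))
    (z : Fin n → 𝒱) (g : Fin n → Fin 2)
    -- (iv) weak-graded-agreement validity for inputs (k, s)
    (hiv : ∀ c : 𝒱, (∀ v ∈ H, k v = c) → ∀ v ∈ H, z v = c ∧ g v = 1)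
    -- (v) weak graded agreement for inputs (k, s)
    (hv : (∀ v ∈ H, s v = 1) → ∀ w ∈ H, g w = 1 → ∀ v ∈ H, z v = z w)
    (recvF : Fin n → Fin n → Option 𝒱)
    -- final round: a correct node sends z to all nodes iff it is its own leader
    (hF : ∀ v : Fin n, ∀ w ∈ H, recvF v w = if ℓ w = some w then some (z w) else none)
    (y : Fin n → Option 𝒱)
    -- output rule at correct nodes
    (hout : ∀ v ∈ H,
      (ℓ v = none → y v = none) ∧
      (∀ ℓ' : Fin n, ℓ v = some ℓ' →
        (g v = 0 → (∀ c : 𝒱, recvF v ℓ' = some c → y v = some c) ∧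
          (recvF v ℓ' = none → y v = some (z v))) ∧
        (g v ≠ 0 → y v = some (z v)))) :
    -- Validity
    (∀ c : 𝒱, (∀ v ∈ H, x v = c) → ∀ v ∈ H, y v = some c ∨ y v = none) ∧
    -- Default
    ((∀ v ∈ H, ℓ v = none) → ∀ v ∈ H, y v = none) ∧
    -- King Agreement
    (∀ ℓ₀ ∈ H, (∀ v ∈ H, ℓ v = some ℓ₀) → ∀ v ∈ H, y v = y ℓ₀ ∧ y ℓ₀ ≠ none) := by
  refine ⟨?_, ?_, ?_⟩
  · -- Validity
    intro c hx v hv'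
    have hk := hi c hx
    have hzg := hiv c hk v hv'
    cases hℓ : ℓ v with
    | none => exact Or.inr ((hout v hv').1 hℓ)
    | some ℓ' =>
      left
      have := ((hout v hv').2 ℓ' hℓ).2 (by rw [hzg.2]; decide)
      rw [this, hzg.1]
  · -- Default
    intro hall v hv'
    exact (hout v hv').1 (hall v hv')
  · -- King Agreement
    intro ℓ₀ hℓ₀ hall
    have hrecvF : ∀ v : Fin n, recvF v ℓ₀ = some (z ℓ₀) := by
      intro v; rw [hF v ℓ₀ hℓ₀, if_pos (hall ℓ₀ hℓ₀)]
    have key : ∀ v ∈ H, y v = some (z ℓ₀) := by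
      intro v hv'
      have h01 : h ℓ₀ = 0 ∨ h ℓ₀ = 1 := by omega
      rcases h01 with h0 | h1
      · -- runGC was sent; all s = 1
        have hsall : ∀ u ∈ H, s u = 1 := by
          intro u hu
          exact (hs u hu).2 ⟨ℓ₀, hall u hu, by
            rw [hGC u ℓ₀ hℓ₀, if_pos ⟨hall ℓ₀ hℓ₀, h0⟩]⟩
        by_cases hg : g v = 0
        · exact (((hout v hv').2 ℓ₀ (hall v hv')).1 hg).1 _ (hrecvF v)
        · have hz : z ℓ₀ = z v :=
            hv hsall v hv' (by omega) ℓ₀ hℓ₀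
          rw [((hout v hv').2 ℓ₀ (hall v hv')).2 hg, hz]
      · -- h ℓ₀ = 1: graded king agreement gives common k, then WGA validity
        have hk := hiii ℓ₀ hℓ₀ hall h1
        have hzg := hiv (k ℓ₀) hk v hv'
        have := ((hout v hv').2 ℓ₀ (hall v hv')).2 (by rw [hzg.2]; decide)
        have hzl := (hiv (k ℓ₀) hk ℓ₀ hℓ₀).1
        rw [this, hzg.1, hzl]
    intro v hv'
    rw [key v hv', key ℓ₀ hℓ₀]
    exact ⟨rfl, by simp⟩
end

section
/- Let n ≥ 1, let ε > 0 be a real number, let 𝒱 be a type with decidable equality, let x : Fin n → 𝒱, and let G be a simple graph on Fin n with the property that for every nonempty set S ⊆ Fin n with |S| ≤ n/2, at least ε·|S| vertices of S have a neighbor outside S. Define A := {u : ∃ w, G.Adj u w ∧ x_w ≠ x_u} and k := |A|. Then for every node v such that |{w : x_w = x_v}| ≤ n/2, the set Q_v := {v + i mod n : 0 ≤ i ≤ ⌈2k/ε⌉} satisfies |{w ∈ Q_v : x_w ≠ x_v}| ≥ |Q_v| / 2. -/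
/-- Combinatorial core of weak king agreement in the fault-free case: in a graph with
vertex expansion ε (every nonempty `S` with `|S| ≤ n/2` has at least `ε·|S|` vertices
with a neighbor outside `S`), let `A` be the set of nodes having a neighbor with a
different value and `k = |A|`. Then every node `v` whose value is shared by at most
half of all nodes sees a different value at at least half of the nodes in its cyclic
query window `Q_v = {v + i mod n : 0 ≤ i ≤ ⌈2k/ε⌉}`. -/
theorem weak_king_query_window_majority_disagrees
    {n : ℕ} [NeZero n] (ε : ℝ) (hε : 0 < ε)
    {𝒱 : Type*} [DecidableEq 𝒱]
    (x : Fin n → 𝒱) (G : SimpleGraph (Fin n))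
    (hexp : ∀ S : Finset (Fin n), S.Nonempty → (S.card : ℝ) ≤ (n : ℝ) / 2 →
      ε * (S.card : ℝ) ≤
        (({u : Fin n | u ∈ S ∧ ∃ w : Fin n, w ∉ S ∧ G.Adj u w}.ncard : ℝ)))
    (A : Set (Fin n)) (hA : A = {u : Fin n | ∃ w : Fin n, G.Adj u w ∧ x w ≠ x u})
    (k : ℕ) (hk : k = A.ncard)
    (v : Fin n) (hv : (({w : Fin n | x w = x v}.ncard : ℝ)) ≤ (n : ℝ) / 2)
    (Q : Finset (Fin n))
    (hQ : Q = (Finset.range (⌈(2 * (k : ℝ)) / ε⌉₊ + 1)).image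
      (fun i : ℕ => v + (Fin.ofNat n i : Fin n))) :
    (Q.card : ℝ) / 2 ≤ ((Q.filter fun w => x w ≠ x v).card : ℝ) := by
  classical
  set m : ℕ := ⌈(2 * (k : ℝ)) / ε⌉₊ + 1 with hm
  set Sfin : Finset (Fin n) := Finset.univ.filter (fun w => x w = x v) with hSfin
  have hvS : v ∈ Sfin := by simp [hSfin]
  have hScard : ({w : Fin n | x w = x v}.ncard : ℝ) = (Sfin.card : ℝ) := by
    congr 1
    rw [show {w : Fin n | x w = x v} = (↑Sfin : Set (Fin n)) by ext w; simp [hSfin]]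
    exact Set.ncard_coe_finset _
  have hS2 : (Sfin.card : ℝ) ≤ (n : ℝ) / 2 := hScard ▸ hv
  have hexp' := hexp Sfin ⟨v, hvS⟩ hS2
  have hsub : {u : Fin n | u ∈ Sfin ∧ ∃ w, w ∉ Sfin ∧ G.Adj u w} ⊆ A := by
    rintro u ⟨huS, w, hwS, hadj⟩
    rw [hA]
    refine ⟨w, hadj, ?_⟩
    have hu : x u = x v := by simpa [hSfin] using huS
    have hw : x w ≠ x v := by simpa [hSfin] using hwS
    rw [hu]; exact hw
  have hcardle : ({u : Fin n | u ∈ Sfin ∧ ∃ w, w ∉ Sfin ∧ G.Adj u w}.ncard : ℝ)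
      ≤ (k : ℝ) := by
    rw [hk]
    exact_mod_cast Set.ncard_le_ncard hsub (Set.toFinite A)
  have hkey : ε * (Sfin.card : ℝ) ≤ (k : ℝ) := le_trans hexp' hcardle
  have hSk : (Sfin.card : ℝ) ≤ (k : ℝ) / ε := by
    rw [le_div_iff₀ hε]; linarith
  -- split the window into agree/disagree parts
  have hsplit : (Q.filter fun w => x w ≠ x v).card
      + (Q.filter fun w => ¬ (x w ≠ x v)).card = Q.card :=
    Finset.card_filter_add_card_filter_not _
  have hagree : (Q.filter fun w => ¬ (x w ≠ x v)).card ≤ Sfin.card := by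
    apply Finset.card_le_card
    intro w hw
    simp only [Finset.mem_filter, not_not] at hw
    simp [hSfin, hw.2]
  -- it suffices that agree ≤ |Q|/2
  suffices h : ((Q.filter fun w => ¬ (x w ≠ x v)).card : ℝ) ≤ (Q.card : ℝ) / 2 by
    have := hsplit
    have h2 : ((Q.filter fun w => x w ≠ x v).card : ℝ)
        + ((Q.filter fun w => ¬ (x w ≠ x v)).card : ℝ) = (Q.card : ℝ) := by
      exact_mod_cast this
    linarith
  have hagreeR : ((Q.filter fun w => ¬ (x w ≠ x v)).card : ℝ) ≤ (Sfin.card : ℝ) := by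
    exact_mod_cast hagree
  rcases le_or_gt m n with hmn | hnm
  · -- window doesn't wrap: |Q| = m ≥ 2k/ε
    have hinj : Set.InjOn (fun i : ℕ => v + (Fin.ofNat n i : Fin n)) (Finset.range m) := by
      intro i hi j hj hij
      simp only [Finset.coe_range, Set.mem_Iio] at hi hj
      have : (Fin.ofNat n i : Fin n) = (Fin.ofNat n j : Fin n) := by
        have := add_right_injective v hij
        simpa using this
      have hval : ((Fin.ofNat n i : Fin n) : ℕ) = ((Fin.ofNat n j : Fin n) : ℕ) := by rw [this]
      rwa [Fin.val_ofNat, Fin.val_ofNat, Nat.mod_eq_of_lt (lt_of_lt_of_le hi hmn),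
        Nat.mod_eq_of_lt (lt_of_lt_of_le hj hmn)] at hval
    have hQcard : Q.card = m := by
      rw [hQ, Finset.card_image_of_injOn hinj, Finset.card_range]
    rw [hQcard]
    have hceil : (2 * (k : ℝ)) / ε ≤ (⌈(2 * (k : ℝ)) / ε⌉₊ : ℝ) := Nat.le_ceil _
    have hmR : ((m : ℕ) : ℝ) = (⌈(2 * (k : ℝ)) / ε⌉₊ : ℝ) + 1 := by
      rw [hm]; push_cast; ring
    have : (k : ℝ) / ε ≤ (m : ℝ) / 2 := by
      rw [hmR]
      have : (2 * (k : ℝ)) / ε = 2 * ((k : ℝ) / ε) := by ring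
      linarith [this ▸ hceil]
    linarith
  · -- window wraps: Q = univ
    have hQuniv : Q = Finset.univ := by
      rw [hQ]
      apply Finset.eq_univ_of_forall
      intro w
      rw [Finset.mem_image]
      refine ⟨((w - v : Fin n) : ℕ), ?_, ?_⟩
      · rw [Finset.mem_range]
        exact lt_trans (w - v).isLt hnm
      · simp [Fin.ofNat_val_eq_self]
    have hQcard : Q.card = n := by rw [hQuniv, Finset.card_univ, Fintype.card_fin]
    rw [hQcard]
    linarith
end
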